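/- For every random variable X ∈ 𝓛_Q, ϱ_Q[X] = ∫_{(0,∞)} (1 − D(F_X(x))) dλ(x) − ∫_{(−∞,0)} D(F_X(x)) dλ(x), where λ is Lebesgue measure (the first integral is finite and the identity holds in [−∞,∞)). -/

import Mathlib

open MeasureTheory

/-- The distribution function `F_X(x) = P[X ≤ x]` of a random variable `X`. -/
noncomputable def distFun {Ω : Type*} [MeasurableSpace Ω] (P : Measure Ω) (X : Ω → ℝ) (x : ℝ) : ℝ :=
  (P {ω | X ω ≤ x}).toReal

/-- The (lower) quantile function `F^←_X(u) = inf {x | F_X(x) ≥ u}`. -/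
noncomputable def quantile {Ω : Type*} [MeasurableSpace Ω] (P : Measure Ω) (X : Ω → ℝ) (u : ℝ) : ℝ :=
  sInf {x : ℝ | u ≤ distFun P X x}

/-- A distortion function: an increasing, right-continuous `D : [0,1] → [0,1]`
with `D 0 = 0` and `sup_{u ∈ (0,1)} D u = 1`. -/
structure IsDistortion (D : ℝ → ℝ) : Prop where
  mapsTo : ∀ u ∈ Set.Icc (0:ℝ) 1, D u ∈ Set.Icc (0:ℝ) 1
  mono : ∀ ⦃a b : ℝ⦄, 0 ≤ a → a ≤ b → b ≤ 1 → D a ≤ D b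
  rightCont : ∀ u ∈ Set.Ico (0:ℝ) 1, ContinuousWithinAt D (Set.Icc u 1) u
  zero : D 0 = 0
  sup_one : sSup (D '' Set.Ioo 0 1) = 1

/-- `Q` is the probability measure on the Borel sets of `(0,1)` corresponding to
the distortion function `D`, i.e. `Q (a,b] = D b - D a` for `0 < a ≤ b < 1`. -/
def IsCorresponding (D : ℝ → ℝ) (Q : Measure ℝ) : Prop :=
  IsProbabilityMeasure Q ∧ Q (Set.Ioo (0:ℝ) 1) = 1 ∧
    ∀ a b : ℝ, 0 < a → a ≤ b → b < 1 → Q (Set.Ioc a b) = ENNReal.ofReal (D b - D a)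

/-- `X ∈ 𝓛_Q`, i.e. `∫_{(0,1)} (F^←_X(u))⁺ dQ(u) < ∞`. -/
def memLQ {Ω : Type*} [MeasurableSpace Ω] (P : Measure Ω) (Q : Measure ℝ) (X : Ω → ℝ) : Prop :=
  ∫⁻ u in Set.Ioo (0:ℝ) 1, ENNReal.ofReal (max (quantile P X u) 0) ∂Q < ⊤

/-- The quantile risk measure
`ϱ_Q[X] = ∫_{(0,1)} (F^←_X(u))⁺ dQ(u) - ∫_{(0,1)} (F^←_X(u))⁻ dQ(u)`, with values in `EReal`. -/
noncomputable def rho {Ω : Type*} [MeasurableSpace Ω] (P : Measure Ω) (Q : Measure ℝ)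
    (X : Ω → ℝ) : EReal :=
  ((∫⁻ u in Set.Ioo (0:ℝ) 1, ENNReal.ofReal (max (quantile P X u) 0) ∂Q) : EReal)
    - ((∫⁻ u in Set.Ioo (0:ℝ) 1, ENNReal.ofReal (max (-(quantile P X u)) 0) ∂Q) : EReal)

open Set Filter Topology

section Aux
variable {Ω : Type*} [MeasurableSpace Ω] {P : Measure Ω} [IsProbabilityMeasure P] {X : Ω → ℝ}

lemma distFun_mono : Monotone (distFun P X) := fun x y hxy =>
  ENNReal.toReal_mono (measure_ne_top _ _) (measure_mono fun ω hω => le_trans hω hxy)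

lemma distFun_nonneg (x : ℝ) : 0 ≤ distFun P X x := ENNReal.toReal_nonneg

lemma distFun_le_one (x : ℝ) : distFun P X x ≤ 1 := by
  have := ENNReal.toReal_mono (b := 1) ENNReal.one_ne_top (prob_le_one (μ := P) (s := {ω | X ω ≤ x}))
  simpa [distFun] using this

lemma le_distFun_of_forall (hX : Measurable X) {u x : ℝ}
    (h : ∀ n : ℕ, u ≤ distFun P X (x + 1/(n+1))) : u ≤ distFun P X x := by
  have hA : ∀ n : ℕ, ENNReal.ofReal u ≤ P {ω | X ω ≤ x + 1/(n+1)} := fun n => by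
    rw [← ENNReal.ofReal_toReal (measure_ne_top P {ω | X ω ≤ x + 1/(n+1)})]
    exact ENNReal.ofReal_le_ofReal (h n)
  have hanti : Antitone (fun n : ℕ => {ω | X ω ≤ x + 1/((n:ℝ)+1)}) := by
    intro m n hmn ω hω
    simp only [mem_setOf_eq] at hω ⊢
    have hc : (m:ℝ) ≤ n := Nat.cast_le.mpr hmn
    have : 1/((n:ℝ)+1) ≤ 1/((m:ℝ)+1) := by
      apply one_div_le_one_div_of_le (by positivity)
      linarith
    linarith
  have hint : (⋂ n : ℕ, {ω | X ω ≤ x + 1/((n:ℝ)+1)}) = {ω | X ω ≤ x} := by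
    ext ω
    simp only [mem_iInter, mem_setOf_eq]
    constructor
    · intro h'
      have hlim : Tendsto (fun n : ℕ => x + 1/((n:ℝ)+1)) atTop (𝓝 x) := by
        simpa using (tendsto_const_nhds : Tendsto (fun _ : ℕ => x) atTop (𝓝 x)).add (tendsto_one_div_add_atTop_nhds_zero_nat : Tendsto (fun n : ℕ => 1 / ((n:ℝ)+1)) atTop (𝓝 0))
      exact ge_of_tendsto' hlim h'
    · intro h' n
      have : (0:ℝ) < 1/((n:ℝ)+1) := by positivity
      linarith
  have ht := tendsto_measure_iInter_atTop (μ := P)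
    (s := fun n : ℕ => {ω | X ω ≤ x + 1/((n:ℝ)+1)})
    (fun n => (hX measurableSet_Iic).nullMeasurableSet) hanti ⟨0, measure_ne_top _ _⟩
  rw [hint] at ht
  have hle : ENNReal.ofReal u ≤ P {ω | X ω ≤ x} := ge_of_tendsto' ht hA
  exact (ENNReal.ofReal_le_iff_le_toReal (measure_ne_top _ _)).mp hle

lemma exists_le_distFun (hX : Measurable X) {u : ℝ} (hu1 : u < 1) :
    ∃ x : ℝ, u ≤ distFun P X x := by
  rcases le_or_gt u 0 with hu | hu
  · exact ⟨0, hu.trans (distFun_nonneg 0)⟩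
  have hmono : Monotone (fun n : ℕ => {ω | X ω ≤ (n:ℝ)}) := fun m n hmn ω hω => by
    simp only [mem_setOf_eq] at hω ⊢; exact hω.trans (by exact_mod_cast hmn)
  have hunion : (⋃ n : ℕ, {ω | X ω ≤ (n:ℝ)}) = univ := by
    ext ω; simp only [mem_iUnion, mem_setOf_eq, mem_univ, iff_true]
    obtain ⟨n, hn⟩ := exists_nat_gt (X ω); exact ⟨n, hn.le⟩
  have ht := tendsto_measure_iUnion_atTop (μ := P) hmono
  rw [hunion, measure_univ] at ht
  have hlt : ENNReal.ofReal u < 1 := ENNReal.ofReal_lt_one.mpr hu1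
  obtain ⟨n, hn⟩ := (ht.eventually (eventually_gt_nhds hlt)).exists
  exact ⟨n, (ENNReal.ofReal_le_iff_le_toReal (measure_ne_top _ _)).mp hn.le⟩

lemma exists_distFun_lt (hX : Measurable X) {u : ℝ} (hu0 : 0 < u) :
    ∃ x : ℝ, distFun P X x < u := by
  have hanti : Antitone (fun n : ℕ => {ω | X ω ≤ -(n:ℝ)}) := fun m n hmn ω hω => by
    simp only [mem_setOf_eq] at hω ⊢
    exact hω.trans (by exact_mod_cast neg_le_neg (by exact_mod_cast hmn))
  have hint : (⋂ n : ℕ, {ω | X ω ≤ -(n:ℝ)}) = (∅ : Set Ω) := by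
    ext ω; simp only [mem_iInter, mem_setOf_eq, mem_empty_iff_false, iff_false, not_forall]
    obtain ⟨n, hn⟩ := exists_nat_gt (-(X ω))
    exact ⟨n, not_le.mpr (by linarith)⟩
  have ht := tendsto_measure_iInter_atTop (μ := P)
    (s := fun n : ℕ => {ω | X ω ≤ -(n:ℝ)})
    (fun n => (hX measurableSet_Iic).nullMeasurableSet) hanti ⟨0, measure_ne_top _ _⟩
  rw [hint, measure_empty] at ht
  have hpos : (0:ENNReal) < ENNReal.ofReal u := ENNReal.ofReal_pos.mpr hu0
  obtain ⟨n, hn⟩ := (ht.eventually (eventually_lt_nhds hpos)).exists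
  exact ⟨-(n:ℝ), ENNReal.toReal_lt_of_lt_ofReal hn⟩

lemma quantile_le_iff (hX : Measurable X) {u x : ℝ} (hu0 : 0 < u) (hu1 : u < 1) :
    quantile P X u ≤ x ↔ u ≤ distFun P X x := by
  have hne : {y : ℝ | u ≤ distFun P X y}.Nonempty := exists_le_distFun (P := P) hX hu1
  obtain ⟨z, hz⟩ := exists_distFun_lt (P := P) hX hu0
  have hbdd : BddBelow {y : ℝ | u ≤ distFun P X y} := by
    refine ⟨z, fun y hy => ?_⟩
    by_contra h
    push_neg at h
    exact absurd (hy.trans (distFun_mono h.le)) (not_le.2 hz)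
  constructor
  · intro h
    refine le_distFun_of_forall hX fun n => ?_
    have hlt : sInf {y : ℝ | u ≤ distFun P X y} < x + 1/((n:ℝ)+1) :=
      lt_of_le_of_lt h (lt_add_of_pos_right x (by positivity))
    obtain ⟨y, hy, hyx⟩ := (csInf_lt_iff hbdd hne).mp hlt
    exact hy.trans (distFun_mono hyx.le)
  · intro h
    exact csInf_le hbdd h

lemma quantile_monoOn (hX : Measurable X) : MonotoneOn (quantile P X) (Ioo (0:ℝ) 1) := by
  intro u hu v hv huv
  refine csInf_le_csInf ?_ (exists_le_distFun (P := P) hX hv.2) (fun y hy => hy.trans' huv)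
  obtain ⟨z, hz⟩ := exists_distFun_lt (P := P) hX hu.1
  refine ⟨z, fun y hy => ?_⟩
  by_contra h
  push_neg at h
  exact absurd (hy.trans (distFun_mono h.le)) (not_le.2 hz)

end Aux

section DQ
open MeasureTheory Set Filter Topology
variable {D : ℝ → ℝ} {Q : Measure ℝ}

lemma IsDistortion.nonneg' (hD : IsDistortion D) {a : ℝ} (h0 : 0 ≤ a) (h1 : a ≤ 1) :
    0 ≤ D a := (hD.mapsTo a ⟨h0, h1⟩).1

lemma IsDistortion.le_one' (hD : IsDistortion D) {a : ℝ} (h0 : 0 ≤ a) (h1 : a ≤ 1) :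
    D a ≤ 1 := (hD.mapsTo a ⟨h0, h1⟩).2

lemma IsDistortion.one (hD : IsDistortion D) : D 1 = 1 := by
  have h1 : ∀ b ∈ D '' Ioo (0:ℝ) 1, b ≤ D 1 := by
    rintro b ⟨u, hu, rfl⟩
    exact hD.mono hu.1.le hu.2.le le_rfl
  have hne : (D '' Ioo (0:ℝ) 1).Nonempty := ⟨D (1/2), ⟨1/2, by norm_num, rfl⟩⟩
  have hle := csSup_le hne h1
  rw [hD.sup_one] at hle
  exact le_antisymm (hD.le_one' zero_le_one le_rfl) hle

lemma IsDistortion.tendsto_zero (hD : IsDistortion D) {a : ℝ} (ha : 0 < a) (ha1 : a ≤ 1) :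
    Tendsto (fun n : ℕ => D (a / ((n:ℝ)+2))) atTop (𝓝 0) := by
  have hc := hD.rightCont 0 ⟨le_rfl, zero_lt_one⟩
  have hseq0 : Tendsto (fun n : ℕ => a / ((n:ℝ)+2)) atTop (𝓝 0) := by
    have h := (tendsto_const_div_atTop_nhds_zero_nat a).comp (tendsto_add_atTop_nat 2)
    refine Filter.Tendsto.congr (fun n => ?_) h
    show a / ((n + 2 : ℕ) : ℝ) = _
    push_cast
    ring
  have hseq : Tendsto (fun n : ℕ => a / ((n:ℝ)+2)) atTop (𝓝[Icc (0:ℝ) 1] 0) := by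
    refine tendsto_nhdsWithin_of_tendsto_nhds_of_eventually_within _ hseq0 ?_
    refine Eventually.of_forall fun n => ⟨by positivity, ?_⟩
    calc a / ((n:ℝ)+2) ≤ a := div_le_self ha.le (by have := Nat.cast_nonneg (α := ℝ) n; linarith)
    _ ≤ 1 := ha1
  simpa [hD.zero, Function.comp_def] using hc.tendsto.comp hseq

lemma measQ_Ioc (hD : IsDistortion D) (hQ : IsCorresponding D Q) {a : ℝ}
    (ha0 : 0 < a) (ha1 : a < 1) : Q (Ioc 0 a) = ENNReal.ofReal (D a) := by
  have hmono : Monotone (fun n : ℕ => Ioc (a/((n:ℝ)+2)) a) := by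
    intro m n hmn
    refine Ioc_subset_Ioc ?_ le_rfl
    have : (m:ℝ) ≤ n := Nat.cast_le.mpr hmn
    gcongr
  have hUnion : (⋃ n : ℕ, Ioc (a/((n:ℝ)+2)) a) = Ioc 0 a := by
    ext x
    simp only [mem_iUnion, mem_Ioc]
    constructor
    · rintro ⟨n, h1, h2⟩
      exact ⟨lt_trans (by positivity) h1, h2⟩
    · rintro ⟨h1, h2⟩
      obtain ⟨n, hn⟩ := exists_nat_gt (a / x)
      refine ⟨n, ?_, h2⟩
      rw [div_lt_iff₀ (by positivity)]
      have := (div_lt_iff₀ h1).mp hn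
      nlinarith
  have ht := tendsto_measure_iUnion_atTop (μ := Q) hmono
  rw [hUnion] at ht
  have heq : ∀ n : ℕ, Q (Ioc (a/((n:ℝ)+2)) a) = ENNReal.ofReal (D a - D (a/((n:ℝ)+2))) :=
    fun n => hQ.2.2 _ _ (by positivity) (div_le_self ha0.le (by have := Nat.cast_nonneg (α := ℝ) n; linarith)) ha1
  have ht2 : Tendsto (fun n : ℕ => ENNReal.ofReal (D a - D (a/((n:ℝ)+2)))) atTop
      (𝓝 (ENNReal.ofReal (D a - 0))) :=
    (ENNReal.continuous_ofReal.tendsto _).comp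
      (tendsto_const_nhds.sub (hD.tendsto_zero ha0 ha1.le))
  rw [sub_zero] at ht2
  exact tendsto_nhds_unique (Filter.Tendsto.congr (fun n => heq n) ht) ht2

lemma measQ_Iic (hD : IsDistortion D) (hQ : IsCorresponding D Q) {a : ℝ}
    (ha0 : 0 ≤ a) (ha1 : a ≤ 1) : Q (Iic a ∩ Ioo 0 1) = ENNReal.ofReal (D a) := by
  rcases eq_or_lt_of_le ha0 with rfl | ha0
  · have : Iic (0:ℝ) ∩ Ioo 0 1 = (∅ : Set ℝ) := by
      ext x; simp only [mem_inter_iff, mem_Iic, mem_Ioo, mem_empty_iff_false, iff_false, not_and]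
      intro h1 h2; linarith [h2]
    rw [this, measure_empty, hD.zero]
    simp
  rcases eq_or_lt_of_le ha1 with rfl | ha1
  · have : Iic (1:ℝ) ∩ Ioo 0 1 = Ioo (0:ℝ) 1 := by
      ext x; simp only [mem_inter_iff, mem_Iic, mem_Ioo]
      exact ⟨fun h => h.2, fun h => ⟨h.2.le, h⟩⟩
    rw [this, hQ.2.1, hD.one]
    simp
  · have : Iic a ∩ Ioo 0 1 = Ioc 0 a := by
      ext x; simp only [mem_inter_iff, mem_Iic, mem_Ioo, mem_Ioc]
      exact ⟨fun h => ⟨h.2.1, h.1⟩, fun h => ⟨h.2, h.1, lt_of_le_of_lt h.2 ha1⟩⟩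
    rw [this, measQ_Ioc hD hQ ha0 ha1]

lemma measQ_Ioi (hD : IsDistortion D) (hQ : IsCorresponding D Q) {a : ℝ}
    (ha0 : 0 ≤ a) (ha1 : a ≤ 1) : Q (Ioi a ∩ Ioo 0 1) = ENNReal.ofReal (1 - D a) := by
  have key : Q (Iic a ∩ Ioo 0 1) + Q (Ioi a ∩ Ioo 0 1) = 1 := by
    rw [← measure_union (Disjoint.mono inter_subset_left inter_subset_left
        (Iic_disjoint_Ioi le_rfl)) (measurableSet_Ioi.inter measurableSet_Ioo)]
    rw [← union_inter_distrib_right, Iic_union_Ioi, univ_inter, hQ.2.1]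
  rw [measQ_Iic hD hQ ha0 ha1] at key
  have h1 : Q (Ioi a ∩ Ioo 0 1) = 1 - ENNReal.ofReal (D a) :=
    ENNReal.eq_sub_of_add_eq ENNReal.ofReal_ne_top (by rw [add_comm]; exact key)
  rw [h1, ENNReal.ofReal_sub _ (hD.nonneg' ha0 ha1), ENNReal.ofReal_one]

end DQ

/-- For every `X ∈ 𝓛_Q`, the integral `∫_{(0,∞)} (1 - D(F_X(x))) dλ(x)` is finite and
`ϱ_Q[X] = ∫_{(0,∞)} (1 - D(F_X(x))) dλ(x) - ∫_{(-∞,0)} D(F_X(x)) dλ(x)` in `[-∞,∞)`. -/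
theorem rho_eq_lintegral_distortion {Ω : Type*} [MeasurableSpace Ω]
    (P : Measure Ω) [IsProbabilityMeasure P] (D : ℝ → ℝ) (Q : Measure ℝ)
    (hD : IsDistortion D) (hQ : IsCorresponding D Q)
    (X : Ω → ℝ) (hX : Measurable X) (hXQ : memLQ P Q X) :
    (∫⁻ x in Set.Ioi (0:ℝ), ENNReal.ofReal (1 - D (distFun P X x))) < ⊤ ∧
    rho P Q X
      = ((∫⁻ x in Set.Ioi (0:ℝ), ENNReal.ofReal (1 - D (distFun P X x))) : EReal)
        - ((∫⁻ x in Set.Iio (0:ℝ), ENNReal.ofReal (D (distFun P X x))) : EReal) := by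
  have hnnA : 0 ≤ᵐ[Q.restrict (Ioo (0:ℝ) 1)] fun u => max (quantile P X u) 0 :=
    Eventually.of_forall fun u => le_max_right _ _
  have hmeasA : AEMeasurable (fun u => max (quantile P X u) 0) (Q.restrict (Ioo (0:ℝ) 1)) :=
    (aemeasurable_restrict_of_monotoneOn measurableSet_Ioo (quantile_monoOn hX)).max
      aemeasurable_const
  have hA := lintegral_eq_lintegral_meas_lt (Q.restrict (Ioo (0:ℝ) 1)) hnnA hmeasA
  have hAfun : ∀ t ∈ Ioi (0:ℝ), (Q.restrict (Ioo (0:ℝ) 1)) {u | t < max (quantile P X u) 0}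
      = ENNReal.ofReal (1 - D (distFun P X t)) := by
    intro t ht
    rw [Measure.restrict_apply' measurableSet_Ioo]
    have hset : {u | t < max (quantile P X u) 0} ∩ Ioo (0:ℝ) 1
        = Ioi (distFun P X t) ∩ Ioo (0:ℝ) 1 := by
      ext u
      simp only [mem_inter_iff, mem_setOf_eq, mem_Ioi, mem_Ioo]
      constructor
      · rintro ⟨h1, h2⟩
        refine ⟨?_, h2⟩
        have hq : t < quantile P X u := by
          rcases lt_max_iff.mp h1 with h | h
          · exact h
          · exact absurd h (not_lt.mpr (le_of_lt ht))
        by_contra hle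
        push_neg at hle
        exact absurd ((quantile_le_iff hX h2.1 h2.2).mpr hle) (not_le.mpr hq)
      · rintro ⟨h1, h2⟩
        refine ⟨lt_max_iff.mpr (Or.inl ?_), h2⟩
        by_contra hle
        push_neg at hle
        exact absurd ((quantile_le_iff hX h2.1 h2.2).mp hle) (not_le.mpr h1)
    rw [hset, measQ_Ioi hD hQ (distFun_nonneg t) (distFun_le_one t)]
  have hAeq : (∫⁻ u in Ioo (0:ℝ) 1, ENNReal.ofReal (max (quantile P X u) 0) ∂Q)
      = ∫⁻ x in Ioi (0:ℝ), ENNReal.ofReal (1 - D (distFun P X x)) := by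
    rw [hA]
    exact setLIntegral_congr_fun measurableSet_Ioi hAfun
  have hnnB : 0 ≤ᵐ[Q.restrict (Ioo (0:ℝ) 1)] fun u => max (-(quantile P X u)) 0 :=
    Eventually.of_forall fun u => le_max_right _ _
  have hmeasB : AEMeasurable (fun u => max (-(quantile P X u)) 0) (Q.restrict (Ioo (0:ℝ) 1)) :=
    ((aemeasurable_restrict_of_monotoneOn measurableSet_Ioo (quantile_monoOn hX)).neg).max
      aemeasurable_const
  have hB := lintegral_eq_lintegral_meas_le (Q.restrict (Ioo (0:ℝ) 1)) hnnB hmeasB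
  have hBfun : ∀ t ∈ Ioi (0:ℝ), (Q.restrict (Ioo (0:ℝ) 1)) {u | t ≤ max (-(quantile P X u)) 0}
      = ENNReal.ofReal (D (distFun P X (-t))) := by
    intro t ht
    rw [Measure.restrict_apply' measurableSet_Ioo]
    have hset : {u | t ≤ max (-(quantile P X u)) 0} ∩ Ioo (0:ℝ) 1
        = Iic (distFun P X (-t)) ∩ Ioo (0:ℝ) 1 := by
      ext u
      simp only [mem_inter_iff, mem_setOf_eq, mem_Iic, mem_Ioo]
      constructor
      · rintro ⟨h1, h2⟩
        have hq : quantile P X u ≤ -t := by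
          rcases le_max_iff.mp h1 with h | h
          · linarith
          · exact absurd h (not_le.mpr ht)
        exact ⟨(quantile_le_iff hX h2.1 h2.2).mp hq, h2⟩
      · rintro ⟨h1, h2⟩
        refine ⟨le_max_iff.mpr (Or.inl ?_), h2⟩
        have := (quantile_le_iff hX h2.1 h2.2).mpr h1
        linarith
    rw [hset, measQ_Iic hD hQ (distFun_nonneg _) (distFun_le_one _)]
  have hBeq : (∫⁻ u in Ioo (0:ℝ) 1, ENNReal.ofReal (max (-(quantile P X u)) 0) ∂Q)
      = ∫⁻ x in Iio (0:ℝ), ENNReal.ofReal (D (distFun P X x)) := by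
    rw [hB, setLIntegral_congr_fun measurableSet_Ioi hBfun]
    have hDF : Measurable fun x : ℝ => ENNReal.ofReal (D (distFun P X x)) := by
      refine ENNReal.measurable_ofReal.comp (Monotone.measurable ?_)
      intro x y hxy
      exact hD.mono (distFun_nonneg x) (distFun_mono hxy) (distFun_le_one y)
    have hmap := setLIntegral_map (μ := (volume : Measure ℝ)) (g := fun x : ℝ => -x)
      (s := Iio (0:ℝ)) measurableSet_Iio hDF measurable_neg
    rw [Measure.map_neg_eq_self (volume : Measure ℝ)] at hmap
    have hpre : (fun x : ℝ => -x) ⁻¹' (Iio 0) = Ioi (0:ℝ) := by ext x; simp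
    rw [hpre] at hmap
    exact hmap.symm
  refine ⟨?_, ?_⟩
  · rw [← hAeq]
    exact hXQ
  · unfold rho
    rw [hAeq, hBeq]
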